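/- Let B be the Blaschke product with zeros (i e^{k/γ})_{k ∈ ℤ} defined by B(z) = ∏_{k ≤ 0} (z − i e^{k/γ})/(z + i e^{k/γ}) · ∏_{k > 0} (i e^{k/γ} − z)/(z + i e^{k/γ}). Then B satisfies the functional equation B(e^{1/γ} z) = −B(z) for all z in the upper half-plane. -/

import Mathlib

open Complex

/-- The general term of the Blaschke product. -/
noncomputable def blTerm (γ : ℝ) (z : ℂ) (k : ℤ) : ℂ :=
  if k ≤ 0 then (z - Complex.I * Real.exp ((k : ℝ) / γ)) /
      (z + Complex.I * Real.exp ((k : ℝ) / γ))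
  else (Complex.I * Real.exp ((k : ℝ) / γ) - z) /
      (z + Complex.I * Real.exp ((k : ℝ) / γ))

lemma blDenom_ne (z : ℂ) (hz : 0 < z.im) (a : ℝ) (ha : 0 ≤ a) :
    z + Complex.I * (a : ℂ) ≠ 0 := by
  intro h
  have him : (z + Complex.I * (a : ℂ)).im = z.im + a := by simp
  rw [h] at him
  simp at him
  have : 0 < z.im + a := by linarith
  linarith [him ▸ this]

lemma blTerm_sub_one_norm_le (γ : ℝ) (hγ : 0 < γ) (z : ℂ) (hz : 0 < z.im) (k : ℤ) :
    ‖blTerm γ z k - 1‖ ≤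
      max (2 / z.im) (2 * ‖z‖) * Real.exp (-(1 / γ)) ^ k.natAbs := by
  set a : ℝ := Real.exp ((k : ℝ) / γ) with ha
  have ha0 : 0 < a := Real.exp_pos _
  have hne : z + Complex.I * (a : ℂ) ≠ 0 := blDenom_ne z hz a ha0.le
  have hnorm : z.im + a ≤ ‖z + Complex.I * (a : ℂ)‖ := by
    have := Complex.abs_im_le_norm (z + Complex.I * (a : ℂ))
    have him : (z + Complex.I * (a : ℂ)).im = z.im + a := by simp
    rw [him] at this
    calc z.im + a ≤ |z.im + a| := le_abs_self _
    _ ≤ ‖z + Complex.I * (a : ℂ)‖ := this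
  rcases le_or_gt k 0 with hk | hk
  · -- k ≤ 0 : term is (z - ia)/(z + ia)
    have hterm : blTerm γ z k - 1 = -2 * Complex.I * (a : ℂ) / (z + Complex.I * (a : ℂ)) := by
      rw [blTerm, if_pos hk, ← ha]
      field_simp
      ring
    have hexp : a = Real.exp (-(1 / γ)) ^ k.natAbs := by
      rw [← Real.exp_nat_mul, ha]
      congr 1
      have h1 : (k.natAbs : ℤ) = -k := by omega
      have : ((k.natAbs : ℝ)) = -(k : ℝ) := by
        rw [Nat.cast_natAbs]; exact_mod_cast abs_of_nonpos hk
      rw [this]; field_simp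
    rw [hterm]
    rw [norm_div]
    have h1 : ‖(-2 : ℂ) * Complex.I * (a : ℂ)‖ = 2 * a := by
      simp [abs_of_pos ha0]
    rw [h1]
    have hzim : (0:ℝ) < z.im := hz
    have hden : z.im ≤ ‖z + Complex.I * (a : ℂ)‖ := by linarith
    have hdpos : (0:ℝ) < ‖z + Complex.I * (a : ℂ)‖ := lt_of_lt_of_le (by linarith) hnorm
    calc 2 * a / ‖z + Complex.I * (a : ℂ)‖ ≤ 2 * a / z.im := by
          rw [div_le_div_iff₀ hdpos hzim]
          exact mul_le_mul_of_nonneg_left hden (by linarith)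
    _ = 2 / z.im * a := by ring
    _ ≤ max (2 / z.im) (2 * ‖z‖) * a := by
          apply mul_le_mul_of_nonneg_right (le_max_left _ _) ha0.le
    _ = max (2 / z.im) (2 * ‖z‖) * Real.exp (-(1 / γ)) ^ k.natAbs := by
          rw [← hexp]
  · -- k > 0 : term is (ia - z)/(z + ia)
    have hterm : blTerm γ z k - 1 = -2 * z / (z + Complex.I * (a : ℂ)) := by
      rw [blTerm, if_neg (by omega), ← ha]
      field_simp
      ring
    have hexp : a⁻¹ = Real.exp (-(1 / γ)) ^ k.natAbs := by
      rw [← Real.exp_nat_mul, ha, ← Real.exp_neg]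
      congr 1
      have h1 : (k.natAbs : ℤ) = k := by omega
      have : ((k.natAbs : ℝ)) = (k : ℝ) := by
        rw [Nat.cast_natAbs]; exact_mod_cast abs_of_pos hk
      rw [this]; field_simp
    rw [hterm, norm_div]
    have h1 : ‖(-2 : ℂ) * z‖ = 2 * ‖z‖ := by
      simp
    rw [h1]
    have hden : a ≤ ‖z + Complex.I * (a : ℂ)‖ := by linarith
    have hdpos : (0:ℝ) < ‖z + Complex.I * (a : ℂ)‖ := lt_of_lt_of_le (by linarith) hnorm
    calc 2 * ‖z‖ / ‖z + Complex.I * (a : ℂ)‖ ≤ 2 * ‖z‖ / a := by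
          rw [div_le_div_iff₀ hdpos ha0]
          exact mul_le_mul_of_nonneg_left hden (by positivity)
    _ = 2 * ‖z‖ * a⁻¹ := by ring
    _ ≤ max (2 / z.im) (2 * ‖z‖) * a⁻¹ := by
          apply mul_le_mul_of_nonneg_right (le_max_right _ _) (inv_nonneg.mpr ha0.le)
    _ = max (2 / z.im) (2 * ‖z‖) * Real.exp (-(1 / γ)) ^ k.natAbs := by
          rw [← hexp]

lemma summable_bound (γ : ℝ) (hγ : 0 < γ) (M : ℝ) :
    Summable (fun k : ℤ => M * Real.exp (-(1 / γ)) ^ k.natAbs) := by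
  have hr0 : (0:ℝ) ≤ Real.exp (-(1 / γ)) := (Real.exp_pos _).le
  have hr1 : Real.exp (-(1 / γ)) < 1 := by
    rw [Real.exp_lt_one_iff]
    have : 0 < 1 / γ := by positivity
    linarith
  have hgeo : Summable (fun n : ℕ => M * Real.exp (-(1 / γ)) ^ n) :=
    (summable_geometric_of_lt_one hr0 hr1).mul_left M
  apply Summable.of_nat_of_neg
  · exact hgeo.congr (fun n => by simp)
  · exact hgeo.congr (fun n => by simp)

lemma summable_blTerm_sub_one (γ : ℝ) (hγ : 0 < γ) (z : ℂ) (hz : 0 < z.im) :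
    Summable (fun k : ℤ => ‖blTerm γ z k - 1‖) :=
  Summable.of_nonneg_of_le (fun _ => norm_nonneg _)
    (blTerm_sub_one_norm_le γ hγ z hz) (summable_bound γ hγ _)

lemma multipliable_blTerm (γ : ℝ) (hγ : 0 < γ) (z : ℂ) (hz : 0 < z.im) :
    Multipliable (blTerm γ z) := by
  by_cases h0 : ∃ k : ℤ, blTerm γ z k = 0
  · obtain ⟨k₀, hk₀⟩ := h0
    refine ⟨0, ?_⟩
    rw [HasProd]
    apply Filter.Tendsto.congr' _ tendsto_const_nhds
    filter_upwards [Filter.eventually_atTop.2 ⟨{k₀}, fun s hs => hs⟩] with s hs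
    exact (Finset.prod_eq_zero (hs (Finset.mem_singleton_self k₀)) hk₀).symm
  · push_neg at h0
    have hsum := summable_blTerm_sub_one γ hγ z hz
    have hlog : Summable (fun k : ℤ => Complex.log (blTerm γ z k)) := by
      apply Summable.of_norm_bounded_eventually (g := fun k => 3/2 * ‖blTerm γ z k - 1‖)
        (hsum.mul_left _)
      have hten : Filter.Tendsto (fun k : ℤ => ‖blTerm γ z k - 1‖)
          Filter.cofinite (nhds 0) := hsum.tendsto_cofinite_zero
      filter_upwards [hten.eventually_le_const (by norm_num : (0:ℝ) < 1/2)] with k hk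
      have h2 := Complex.norm_log_one_add_half_le_self (z := blTerm γ z k - 1) hk
      rw [show (1 : ℂ) + (blTerm γ z k - 1) = blTerm γ z k by ring] at h2
      exact h2
    exact Complex.multipliable_of_summable_log hlog

lemma blTerm_shift (γ : ℝ) (hγ : 0 < γ) (z : ℂ) (hz : 0 < z.im) (k : ℤ) :
    blTerm γ ((Real.exp (1 / γ) : ℝ) * z) k =
      blTerm γ z (k - 1) * (if k = 1 then (-1 : ℂ) else 1) := by
  have he : (Real.exp (1 / γ) : ℂ) ≠ 0 := by
    simp [Real.exp_ne_zero]
  have hexp : Real.exp (1 / γ) * Real.exp (((k : ℝ) - 1) / γ) = Real.exp ((k : ℝ) / γ) := by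
    rw [← Real.exp_add]
    congr 1
    field_simp
    ring
  have hcast : ((k - 1 : ℤ) : ℝ) = (k : ℝ) - 1 := by push_cast; ring
  have hne : z + Complex.I * (Real.exp (((k : ℝ) - 1) / γ) : ℂ) ≠ 0 :=
    blDenom_ne z hz _ (Real.exp_pos _).le
  rcases le_or_gt k 0 with hk | hk
  · rw [blTerm, blTerm, if_pos hk, if_pos (by omega : k - 1 ≤ 0), if_neg (by omega), hcast]
    rw [mul_one]
    rw [show ((Real.exp ((k:ℝ) / γ)) : ℂ) =
      (Real.exp (1 / γ) : ℂ) * (Real.exp (((k : ℝ) - 1) / γ) : ℂ) by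
        rw [← hexp]; push_cast; ring]
    rw [show ((Real.exp (1/γ)):ℂ) * z - Complex.I * ((Real.exp (1 / γ) : ℂ) *
        (Real.exp (((k : ℝ) - 1) / γ) : ℂ)) = (Real.exp (1/γ) : ℂ) *
        (z - Complex.I * (Real.exp (((k : ℝ) - 1) / γ) : ℂ)) by ring]
    rw [show ((Real.exp (1/γ)):ℂ) * z + Complex.I * ((Real.exp (1 / γ) : ℂ) *
        (Real.exp (((k : ℝ) - 1) / γ) : ℂ)) = (Real.exp (1/γ) : ℂ) *
        (z + Complex.I * (Real.exp (((k : ℝ) - 1) / γ) : ℂ)) by ring]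
    rw [mul_div_mul_left _ _ he]
  · rcases eq_or_lt_of_le (by omega : (1:ℤ) ≤ k) with hk1 | hk2
    · -- k = 1
      rw [blTerm, blTerm, if_neg (by omega), if_pos (by omega : k - 1 ≤ 0), if_pos hk1.symm, hcast]
      rw [show ((Real.exp ((k:ℝ) / γ)) : ℂ) =
        (Real.exp (1 / γ) : ℂ) * (Real.exp (((k : ℝ) - 1) / γ) : ℂ) by
          rw [← hexp]; push_cast; ring]
      rw [show Complex.I * ((Real.exp (1 / γ) : ℂ) * (Real.exp (((k : ℝ) - 1) / γ) : ℂ)) -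
          ((Real.exp (1/γ)):ℂ) * z = (Real.exp (1/γ) : ℂ) *
          (Complex.I * (Real.exp (((k : ℝ) - 1) / γ) : ℂ) - z) by ring]
      rw [show ((Real.exp (1/γ)):ℂ) * z + Complex.I * ((Real.exp (1 / γ) : ℂ) *
          (Real.exp (((k : ℝ) - 1) / γ) : ℂ)) = (Real.exp (1/γ) : ℂ) *
          (z + Complex.I * (Real.exp (((k : ℝ) - 1) / γ) : ℂ)) by ring]
      rw [mul_div_mul_left _ _ he]
      rw [div_mul_eq_mul_div]
      congr 1
      ring
    · -- k ≥ 2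
      rw [blTerm, blTerm, if_neg (by omega), if_neg (by omega), if_neg (by omega), hcast]
      rw [mul_one]
      rw [show ((Real.exp ((k:ℝ) / γ)) : ℂ) =
        (Real.exp (1 / γ) : ℂ) * (Real.exp (((k : ℝ) - 1) / γ) : ℂ) by
          rw [← hexp]; push_cast; ring]
      rw [show Complex.I * ((Real.exp (1 / γ) : ℂ) * (Real.exp (((k : ℝ) - 1) / γ) : ℂ)) -
          ((Real.exp (1/γ)):ℂ) * z = (Real.exp (1/γ) : ℂ) *
          (Complex.I * (Real.exp (((k : ℝ) - 1) / γ) : ℂ) - z) by ring]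
      rw [show ((Real.exp (1/γ)):ℂ) * z + Complex.I * ((Real.exp (1 / γ) : ℂ) *
          (Real.exp (((k : ℝ) - 1) / γ) : ℂ)) = (Real.exp (1/γ) : ℂ) *
          (z + Complex.I * (Real.exp (((k : ℝ) - 1) / γ) : ℂ)) by ring]
      rw [mul_div_mul_left _ _ he]

/-- The Blaschke product `B(z) = ∏_{k≤0} (z − ie^{k/γ})/(z + ie^{k/γ}) ·
∏_{k>0} (ie^{k/γ} − z)/(z + ie^{k/γ})` satisfies `B(e^{1/γ} z) = −B(z)` on the
upper half-plane. -/
theorem stmt13 (γ : ℝ) (hγ : 0 < γ) (B : ℂ → ℂ)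
    (hB : ∀ z : ℂ, B z = ∏' k : ℤ,
      if k ≤ 0 then (z - Complex.I * Real.exp ((k : ℝ) / γ)) /
          (z + Complex.I * Real.exp ((k : ℝ) / γ))
      else (Complex.I * Real.exp ((k : ℝ) / γ) - z) /
          (z + Complex.I * Real.exp ((k : ℝ) / γ))) :
    ∀ z : ℂ, 0 < z.im → B (Real.exp (1 / γ) * z) = -B z := by
  intro z hz
  have hBz : ∀ w : ℂ, B w = ∏' k : ℤ, blTerm γ w k := by
    intro w; rw [hB w]; rfl
  rw [hBz, hBz]
  have hmul := multipliable_blTerm γ hγ z hz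
  have hprod : HasProd (blTerm γ z) (∏' k : ℤ, blTerm γ z k) := hmul.hasProd
  -- shifted product
  have hshift : HasProd (fun k : ℤ => blTerm γ z (k - 1)) (∏' k : ℤ, blTerm γ z k) := by
    have := (Equiv.subRight (1 : ℤ)).hasProd_iff.2 hprod
    exact this
  have hsign : HasProd (fun k : ℤ => if k = 1 then (-1 : ℂ) else 1) (-1) :=
    hasProd_ite_eq 1 (-1)
  have hmain : HasProd (blTerm γ ((Real.exp (1 / γ) : ℝ) * z))
      ((∏' k : ℤ, blTerm γ z k) * (-1)) := by
    apply (hshift.mul hsign).congr_fun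
    intro k
    exact blTerm_shift γ hγ z hz k
  rw [hmain.tprod_eq]
  ring
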